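/- For any antibalanced signed graph Σ on n vertices, the balancing dimension of the Cartesian product Σ □ K_n⁻ equals the balancing dimension of K_n⁻, where K_n⁻ is the all-negative complete graph on n vertices. -/

import Mathlib

open Finset
open scoped Classical

/-- A signed graph: a simple graph together with a ±1 sign on each edge. -/
structure SGraph (V : Type*) where
  G : SimpleGraph V
  sign : V → V → ℤ
  sign_symm : ∀ u v, sign u v = sign v u
  sign_mem : ∀ u v, G.Adj u v → sign u v = 1 ∨ sign u v = -1

variable {V V1 V2 W : Type*}

/-- `ζ` is a positive k-switching function for the signed graph `S`. -/
def IsPosSwitching [Fintype V] (S : SGraph V) (k : ℕ) (ζ : V → Fin k → ℤ) : Prop :=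
  (∀ v i, ζ v i = -1 ∨ ζ v i = 0 ∨ ζ v i = 1) ∧
  (∀ u v, S.G.Adj u v → (∑ i, ζ u i * ζ v i) ≠ 0) ∧
  (∀ u v, S.G.Adj u v → S.sign u v * Int.sign (∑ i, ζ u i * ζ v i) = 1)

def HasPosSwitching [Fintype V] (S : SGraph V) (k : ℕ) : Prop :=
  ∃ ζ : V → Fin k → ℤ, IsPosSwitching S k ζ

/-- The balancing dimension: least `k ≥ 1` admitting a positive k-switching function. -/
noncomputable def bdim [Fintype V] (S : SGraph V) : ℕ :=
  sInf {k | 1 ≤ k ∧ HasPosSwitching S k}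

/-- A signed graph is balanced iff it can be switched to all-positive by a 1-switching. -/
def SGraph.Balanced [Fintype V] (S : SGraph V) : Prop := HasPosSwitching S 1

/-- The negation of a signed graph. -/
def SGraph.neg (S : SGraph V) : SGraph V where
  G := S.G
  sign := fun u v => - S.sign u v
  sign_symm := fun u v => by (try dsimp only); rw [S.sign_symm]
  sign_mem := fun u v h => by rcases S.sign_mem u v h with h1 | h1 <;> simp [h1]

def SGraph.Antibalanced [Fintype V] (S : SGraph V) : Prop := S.neg.Balanced

/-- Switching equivalence of signed graphs. -/
def SwitchEquiv (S1 S2 : SGraph V) : Prop :=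
  S1.G = S2.G ∧ ∃ η : V → ℤ, (∀ v, η v = 1 ∨ η v = -1) ∧
    ∀ u v, S1.G.Adj u v → S2.sign u v = η u * S1.sign u v * η v

/-- The Cartesian product of signed graphs. -/
noncomputable def cartProd (S1 : SGraph V1) (S2 : SGraph V2) : SGraph (V1 × V2) where
  G := S1.G □ S2.G
  sign := fun p q => if p.2 = q.2 then S1.sign p.1 q.1 else S2.sign p.2 q.2
  sign_symm := by
    intro u v
    try dsimp only
    rcases eq_or_ne u.2 v.2 with h | h
    · rw [if_pos h, if_pos h.symm, S1.sign_symm]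
    · rw [if_neg h, if_neg (Ne.symm h), S2.sign_symm]
  sign_mem := by
    intro u v h
    try dsimp only
    rcases (SimpleGraph.boxProd_adj.mp h) with ⟨h1, h2⟩ | ⟨h1, h2⟩
    · rw [if_pos h2]; exact S1.sign_mem _ _ h1
    · rw [if_neg h1.ne]; exact S2.sign_mem _ _ h1
/-- The HG-lexicographic product of signed graphs. -/
noncomputable def lexHG (S1 : SGraph V1) (S2 : SGraph V2) : SGraph (V1 × V2) where
  G := { Adj := fun p q => S1.G.Adj p.1 q.1 ∨ (p.1 = q.1 ∧ S2.G.Adj p.2 q.2)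
         symm := Std.Symm.mk <| by
           rintro p q (h | ⟨h1, h2⟩)
           · exact Or.inl h.symm
           · exact Or.inr ⟨h1.symm, h2.symm⟩
         loopless := Std.Irrefl.mk <| by
           rintro p (h | ⟨_, h⟩)
           · exact S1.G.irrefl h
           · exact S2.G.irrefl h }
  sign := fun p q => if p.1 = q.1 then S2.sign p.2 q.2 else S1.sign p.1 q.1
  sign_symm := by
    intro u v
    try dsimp only
    rcases eq_or_ne u.1 v.1 with h | h
    · rw [if_pos h, if_pos h.symm, S2.sign_symm]
    · rw [if_neg h, if_neg (Ne.symm h), S1.sign_symm]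
  sign_mem := by
    rintro p q (h | ⟨h1, h2⟩)
    · (try dsimp only); rw [if_neg h.ne]; exact S1.sign_mem _ _ h
    · (try dsimp only); rw [if_pos h1]; exact S2.sign_mem _ _ h2

/-- The BCD-lexicographic product of signed graphs. -/
noncomputable def lexBCD (S1 : SGraph V1) (S2 : SGraph V2) : SGraph (V1 × V2) where
  G := { Adj := fun p q => S1.G.Adj p.1 q.1 ∨ (p.1 = q.1 ∧ S2.G.Adj p.2 q.2)
         symm := Std.Symm.mk <| by
           rintro p q (h | ⟨h1, h2⟩)
           · exact Or.inl h.symm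
           · exact Or.inr ⟨h1.symm, h2.symm⟩
         loopless := Std.Irrefl.mk <| by
           rintro p (h | ⟨_, h⟩)
           · exact S1.G.irrefl h
           · exact S2.G.irrefl h }
  sign := fun p q =>
    if S2.G.Adj p.2 q.2 then
      (if S1.G.Adj p.1 q.1 then S1.sign p.1 q.1 * S2.sign p.2 q.2 else S2.sign p.2 q.2)
    else S1.sign p.1 q.1
  sign_symm := by
    intro u v
    try dsimp only
    rw [S1.G.adj_comm v.1 u.1, S2.G.adj_comm v.2 u.2, S1.sign_symm v.1 u.1,
      S2.sign_symm v.2 u.2]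
  sign_mem := by
    rintro p q (h | ⟨h1, h2⟩) <;> try dsimp only
    · by_cases h2 : S2.G.Adj p.2 q.2
      · rw [if_pos h2, if_pos h]
        rcases S1.sign_mem _ _ h with e1 | e1 <;> rcases S2.sign_mem _ _ h2 with e2 | e2 <;>
          simp [e1, e2]
      · rw [if_neg h2]; exact S1.sign_mem _ _ h
    · rw [if_pos h2, if_neg (h1 ▸ S1.G.irrefl)]
      exact S2.sign_mem _ _ h2

/-- The tensor product of signed graphs. -/
def tensorProd (S1 : SGraph V1) (S2 : SGraph V2) : SGraph (V1 × V2) where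
  G := { Adj := fun p q => S1.G.Adj p.1 q.1 ∧ S2.G.Adj p.2 q.2
         symm := ⟨fun p q ⟨h1, h2⟩ => ⟨h1.symm, h2.symm⟩⟩
         loopless := ⟨fun p ⟨h1, _⟩ => S1.G.irrefl h1⟩ }
  sign := fun p q => S1.sign p.1 q.1 * S2.sign p.2 q.2
  sign_symm := by
    intro u v
    try dsimp only
    rw [S1.sign_symm, S2.sign_symm]
  sign_mem := by
    rintro p q ⟨h1, h2⟩
    try dsimp only
    rcases S1.sign_mem _ _ h1 with e1 | e1 <;> rcases S2.sign_mem _ _ h2 with e2 | e2 <;>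
      simp [e1, e2]

/-- The strong product of signed graphs. -/
noncomputable def strongProd (S1 : SGraph V1) (S2 : SGraph V2) : SGraph (V1 × V2) where
  G := { Adj := fun p q => (S1.G.Adj p.1 q.1 ∧ p.2 = q.2) ∨ (p.1 = q.1 ∧ S2.G.Adj p.2 q.2) ∨
           (S1.G.Adj p.1 q.1 ∧ S2.G.Adj p.2 q.2)
         symm := Std.Symm.mk <| by
           rintro p q (⟨h1, h2⟩ | ⟨h1, h2⟩ | ⟨h1, h2⟩)
           · exact Or.inl ⟨h1.symm, h2.symm⟩
           · exact Or.inr (Or.inl ⟨h1.symm, h2.symm⟩)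
           · exact Or.inr (Or.inr ⟨h1.symm, h2.symm⟩)
         loopless := Std.Irrefl.mk <| by
           rintro p (⟨h1, _⟩ | ⟨_, h2⟩ | ⟨h1, _⟩)
           · exact S1.G.irrefl h1
           · exact S2.G.irrefl h2
           · exact S1.G.irrefl h1 }
  sign := fun p q =>
    if p.1 = q.1 then S2.sign p.2 q.2
    else if p.2 = q.2 then S1.sign p.1 q.1
    else S1.sign p.1 q.1 * S2.sign p.2 q.2
  sign_symm := by
    intro u v
    try dsimp only
    rcases eq_or_ne u.1 v.1 with h | h
    · rw [if_pos h, if_pos h.symm, S2.sign_symm]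
    · rw [if_neg h, if_neg (Ne.symm h)]
      rcases eq_or_ne u.2 v.2 with h' | h'
      · rw [if_pos h', if_pos h'.symm, S1.sign_symm]
      · rw [if_neg h', if_neg (Ne.symm h'), S1.sign_symm, S2.sign_symm]
  sign_mem := by
    rintro p q (⟨h1, h2⟩ | ⟨h1, h2⟩ | ⟨h1, h2⟩) <;> try dsimp only
    · rw [if_neg h1.ne, if_pos h2]; exact S1.sign_mem _ _ h1
    · rw [if_pos h1]; exact S2.sign_mem _ _ h2
    · rw [if_neg h1.ne, if_neg h2.ne]
      rcases S1.sign_mem _ _ h1 with e1 | e1 <;> rcases S2.sign_mem _ _ h2 with e2 | e2 <;>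
        simp [e1, e2]
/-- The cycle on `ZMod n` (vertices `0,1,…,n-1`) with the single negative edge `{0,1}`. -/
noncomputable def Cneg (n : ℕ) : SGraph (ZMod n) where
  G := { Adj := fun i j => i ≠ j ∧ (i - j = 1 ∨ j - i = 1)
         symm := ⟨fun i j ⟨h1, h2⟩ => ⟨h1.symm, h2.symm⟩⟩
         loopless := ⟨fun i ⟨h1, _⟩ => h1 rfl⟩ }
  sign := fun i j => if (i = 0 ∧ j = 1) ∨ (i = 1 ∧ j = 0) then -1 else 1
  sign_symm := by
    intro u v
    try dsimp only
    exact if_congr (by tauto) rfl rfl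
  sign_mem := by
    intro u v _
    try dsimp only
    by_cases h : (u = 0 ∧ v = 1) ∨ (u = 1 ∧ v = 0)
    · rw [if_pos h]; exact Or.inr rfl
    · rw [if_neg h]; exact Or.inl rfl

/-- The all-negative complete signed graph on `n` vertices. -/
def Kneg (n : ℕ) : SGraph (Fin n) where
  G := ⊤
  sign := fun _ _ => -1
  sign_symm := fun _ _ => rfl
  sign_mem := fun _ _ _ => Or.inr rfl

/-- The edgeless signed graph on `k` vertices. -/
def Nk (k : ℕ) : SGraph (Fin k) where
  G := ⊥
  sign := fun _ _ => 1
  sign_symm := fun _ _ => rfl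
  sign_mem := fun _ _ h => (h.elim)

/-- The lexicographic product of simple graphs. -/
def lexProdGraph (G : SimpleGraph V1) (H : SimpleGraph V2) : SimpleGraph (V1 × V2) where
  Adj p q := G.Adj p.1 q.1 ∨ (p.1 = q.1 ∧ H.Adj p.2 q.2)
  symm := Std.Symm.mk <| by
    rintro p q (h | ⟨h1, h2⟩)
    · exact Or.inl h.symm
    · exact Or.inr ⟨h1.symm, h2.symm⟩
  loopless := Std.Irrefl.mk <| by
    rintro p (h | ⟨_, h⟩)
    · exact G.irrefl h
    · exact H.irrefl h



lemma cartProd_sign_snd_ne {V1 V2 : Type*} (S1 : SGraph V1) (S2 : SGraph V2)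
    (p q : V1 × V2) (h : p.2 ≠ q.2) :
    (cartProd S1 S2).sign p q = S2.sign p.2 q.2 := if_neg h

lemma cartProd_sign_snd_eq {V1 V2 : Type*} (S1 : SGraph V1) (S2 : SGraph V2)
    (p q : V1 × V2) (h : p.2 = q.2) :
    (cartProd S1 S2).sign p q = S1.sign p.1 q.1 := if_pos h

lemma kneg_inner {n k : ℕ} {ζ : Fin n → Fin k → ℤ} (hζ : IsPosSwitching (Kneg n) k ζ)
    {a b : Fin n} (hab : a ≠ b) :
    (∑ i, ζ a i * ζ b i) ≠ 0 ∧ Int.sign (∑ i, ζ a i * ζ b i) = -1 := by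
  have hadj : (Kneg n).G.Adj a b := by
    show (⊤ : SimpleGraph (Fin n)).Adj a b
    simpa using hab
  refine ⟨hζ.2.1 a b hadj, ?_⟩
  have h3 := hζ.2.2 a b hadj
  have hs : (Kneg n).sign a b = -1 := rfl
  rw [hs] at h3
  linarith

lemma main_iff {V : Type*} [Fintype V] (n k : ℕ) (S : SGraph V)
    (hcard : Fintype.card V = n) (hS : S.Antibalanced) :
    HasPosSwitching (cartProd S (Kneg n)) k ↔ HasPosSwitching (Kneg n) k := by
  rcases Nat.eq_zero_or_pos n with hn | hn
  · subst hn
    constructor <;> intro _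
    · refine ⟨fun _ _ => 0, ?_, ?_, ?_⟩ <;> intro v <;> exact v.elim0
    · refine ⟨fun _ _ => 0, ?_, ?_, ?_⟩ <;> intro v <;> exact v.2.elim0
  obtain ⟨m, rfl⟩ : ∃ m, n = m + 1 := ⟨n - 1, by omega⟩
  have hne : Nonempty V := Fintype.card_pos_iff.mp (by omega)
  constructor
  · rintro ⟨ξ, hξ1, hξ2, hξ3⟩
    obtain ⟨v⟩ := hne
    have hadjP : ∀ j l : Fin (m + 1), j ≠ l →
        (cartProd S (Kneg (m + 1))).G.Adj (v, j) (v, l) := by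
      intro j l h
      exact SimpleGraph.boxProd_adj.mpr (Or.inr ⟨by show (⊤ : SimpleGraph (Fin (m + 1))).Adj j l; simpa using h, rfl⟩)
    refine ⟨fun j => ξ (v, j), fun j i => hξ1 _ _, ?_, ?_⟩
    · intro j l h
      exact hξ2 _ _ (hadjP j l h.ne)
    · intro j l h
      have h3 := hξ3 _ _ (hadjP j l h.ne)
      rwa [cartProd_sign_snd_ne S (Kneg (m + 1)) (v, j) (v, l) h.ne] at h3
  · rintro ⟨ζ, hζ⟩
    obtain ⟨ζ₀, hζ₀⟩ := hS
    set η : V → ℤ := fun u => if ζ₀ u 0 = 0 then 1 else ζ₀ u 0 with hηdef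
    have hη : ∀ u, η u = 1 ∨ η u = -1 := by
      intro u
      by_cases h : ζ₀ u 0 = 0
      · left; simp [hηdef, h]
      · rcases hζ₀.1 u 0 with h' | h' | h'
        · right; simp [hηdef, h, h']
        · exact absurd h' h
        · left; simp [hηdef, h, h']
    have hηsq : ∀ u, η u * η u = 1 := by
      intro u; rcases hη u with h | h <;> rw [h] <;> ring
    have hedge : ∀ u w, S.G.Adj u w → η u * η w = - S.sign u w := by
      intro u w h
      have hadj : S.neg.G.Adj u w := h
      have hne2 := hζ₀.2.1 u w hadj
      have h3 := hζ₀.2.2 u w hadj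
      rw [Fin.sum_univ_one] at hne2 h3
      have hu : ζ₀ u 0 ≠ 0 := left_ne_zero_of_mul hne2
      have hw : ζ₀ w 0 ≠ 0 := right_ne_zero_of_mul hne2
      have heu : η u = ζ₀ u 0 := if_neg hu
      have hew : η w = ζ₀ w 0 := if_neg hw
      have hsgn : S.neg.sign u w = - S.sign u w := rfl
      rw [hsgn] at h3
      have hp : ζ₀ u 0 * ζ₀ w 0 = 1 ∨ ζ₀ u 0 * ζ₀ w 0 = -1 := by
        rcases hζ₀.1 u 0 with h1 | h1 | h1 <;> rcases hζ₀.1 w 0 with h2 | h2 | h2 <;>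
          simp_all
      have hsp : Int.sign (ζ₀ u 0 * ζ₀ w 0) = ζ₀ u 0 * ζ₀ w 0 := by
        rcases hp with hp | hp <;> rw [hp] <;> rfl
      rw [hsp] at h3
      rw [heu, hew]
      rcases S.sign_mem u w h with hs | hs <;> rw [hs] at h3 ⊢ <;>
        rcases hp with hp | hp <;> rw [hp] at h3 ⊢ <;> omega
    obtain ⟨e⟩ : Nonempty (V ≃ Fin (m + 1)) := ⟨Fintype.equivFinOfCardEq hcard⟩
    refine ⟨fun p i => η p.1 * ζ (e p.1 + p.2) i, ?_, ?_, ?_⟩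
    · intro p i
      show η p.1 * ζ (e p.1 + p.2) i = -1 ∨ η p.1 * ζ (e p.1 + p.2) i = 0 ∨
        η p.1 * ζ (e p.1 + p.2) i = 1
      rcases hη p.1 with h | h <;> rcases hζ.1 (e p.1 + p.2) i with h' | h' | h' <;>
        rw [h, h'] <;> norm_num
    · rintro ⟨u, j⟩ ⟨w, l⟩ h
      dsimp only
      have hsum : (∑ i, (η u * ζ (e u + j) i) * (η w * ζ (e w + l) i)) =
          (η u * η w) * ∑ i, ζ (e u + j) i * ζ (e w + l) i := by
        rw [Finset.mul_sum]
        exact Finset.sum_congr rfl (fun i _ => by ring)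
      rw [hsum]
      rcases SimpleGraph.boxProd_adj.mp h with ⟨h1, h2⟩ | ⟨h1, h2⟩ <;> dsimp only at h1 h2
      · subst h2
        have hab : e u + j ≠ e w + j := fun hcon =>
          h1.ne (e.injective (add_left_injective j hcon))
        exact mul_ne_zero (by rcases hη u with h' | h' <;> rcases hη w with h'' | h'' <;>
          rw [h', h''] <;> norm_num) (kneg_inner hζ hab).1
      · subst h2
        have hab : e u + j ≠ e u + l := fun hcon => h1.ne (add_right_injective (e u) hcon)
        rw [hηsq u, one_mul]
        exact (kneg_inner hζ hab).1
    · rintro ⟨u, j⟩ ⟨w, l⟩ h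
      have hsum : (∑ i, (η u * ζ (e u + j) i) * (η w * ζ (e w + l) i)) =
          (η u * η w) * ∑ i, ζ (e u + j) i * ζ (e w + l) i := by
        rw [Finset.mul_sum]
        exact Finset.sum_congr rfl (fun i _ => by ring)
      rcases SimpleGraph.boxProd_adj.mp h with ⟨h1, h2⟩ | ⟨h1, h2⟩ <;> dsimp only at h1 h2
      · subst h2
        have hab : e u + j ≠ e w + j := fun hcon =>
          h1.ne (e.injective (add_left_injective j hcon))
        obtain ⟨hA, hsA⟩ := kneg_inner hζ hab
        rw [cartProd_sign_snd_eq S (Kneg (m + 1)) (u, j) (w, j) rfl]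
        dsimp only
        rw [hsum, hedge u w h1]
        rcases S.sign_mem u w h1 with hs | hs <;> rw [hs] <;>
          simp only [one_mul, neg_neg, neg_one_mul, Int.sign_neg, hsA] <;> norm_num
      · subst h2
        have hjl : j ≠ l := h1.ne
        have hab : e u + j ≠ e u + l := fun hcon => h1.ne (add_right_injective (e u) hcon)
        obtain ⟨hA, hsA⟩ := kneg_inner hζ hab
        rw [cartProd_sign_snd_ne S (Kneg (m + 1)) (u, j) (u, l) hjl]
        have hK : (Kneg (m + 1)).sign ((u, j) : V × Fin (m + 1)).2 ((u, l) : V × Fin (m + 1)).2 = -1 := rfl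
        rw [hK]
        dsimp only
        rw [hsum, hηsq u, one_mul, hsA]
        norm_num

theorem stmt6 (n : ℕ) [Fintype V] (S : SGraph V) (hcard : Fintype.card V = n)
    (hS : S.Antibalanced) :
    bdim (cartProd S (Kneg n)) = bdim (Kneg n) := by
  unfold bdim
  congr 1
  ext k
  simp only [Set.mem_setOf_eq]
  exact and_congr_right fun _ => main_iff n k S hcard hS
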